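/- Let e = (1,3,1,1,0) ∈ ℤ^5, so that Q_11(e) = 0, and let M = {x ∈ ℤ^5 : B_11(x, e) = 0}. Then the subgroup of M generated by e together with all roots of M (i.e., all r ∈ M with Q_11(r) > 0 such that Q_11(r) divides 2·B_11(r, x) for every x ∈ M) is a proper subgroup of M. -/

import Mathlib

/-- The bilinear form `B_p(x,y) = -p·x_0·y_0 + x_1·y_1 + … + x_n·y_n` on `ℤ^{n+1}`. -/
def Bform (p : ℤ) {n : ℕ} (x y : Fin (n + 1) → ℤ) : ℤ :=
  -p * x 0 * y 0 + ∑ i ∈ Finset.univ.filter (fun i : Fin (n + 1) => i ≠ 0), x i * y i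

/-- The quadratic form `Q_p(x) = B_p(x,x)`. -/
def Qform (p : ℤ) {n : ℕ} (x : Fin (n + 1) → ℤ) : ℤ := Bform p x x

/-- The primitive null vector `e`. -/
def eVec : Fin 5 → ℤ := ![1, 3, 1, 1, 0]

lemma Bform_apply (p : ℤ) (x y : Fin 5 → ℤ) :
    Bform p x y = -p * x 0 * y 0 + (x 1 * y 1 + x 2 * y 2 + x 3 * y 3 + x 4 * y 4) := by
  simp [Bform, Finset.sum_filter, Fin.sum_univ_five]

/-- Core arithmetic lemma: in the quadratic form `2α²-6αβ+10β²+γ²` of determinant 11,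
any root has even `β`. -/
lemma core_parity (α β γ m : ℤ) (hm : 0 < m)
    (hQ : m = 2*α^2 - 6*α*β + 10*β^2 + γ^2)
    (h1 : m ∣ 2*(2*α - 3*β)) (h3 : m ∣ 2*γ) : 2 ∣ β := by
  by_contra hodd
  have hβ1 : 1 ≤ β^2 := by
    rcases (by omega : β ≤ -1 ∨ 1 ≤ β) with h | h <;> nlinarith
  rcases eq_or_ne γ 0 with hγ | hγ
  · -- γ = 0
    subst hγ
    have hk : m = 2*(α^2 - 3*α*β + 5*β^2) := by linarith [hQ]
    set k := α^2 - 3*α*β + 5*β^2 with hkdef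
    have hkpos : 0 < k := by linarith
    have hks : k ∣ 2*α - 3*β := by
      have h2 : 2*k ∣ 2*(2*α - 3*β) := hk ▸ h1
      exact (mul_dvd_mul_iff_left (two_ne_zero (α := ℤ))).mp h2
    have h4k : 4*k = (2*α - 3*β)^2 + 11*β^2 := by rw [hkdef]; ring
    rcases eq_or_ne (2*α - 3*β) 0 with hs | hs
    · rw [hs] at h4k
      obtain ⟨t, ht⟩ : ∃ t, β = 2*t + 1 := ⟨β/2, by omega⟩
      have h2 : 4*(k - 11*t^2 - 11*t) = 11 := by
        rw [ht] at h4k; ring_nf; ring_nf at h4k; linarith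
      set X := k - 11*t^2 - 11*t with hX
      omega
    · have hle : k ≤ |2*α - 3*β| := Int.le_of_dvd (abs_pos.mpr hs) ((dvd_abs _ _).mpr hks)
      have h1' : k^2 ≤ (2*α - 3*β)^2 := by nlinarith [sq_abs (2*α - 3*β)]
      nlinarith [sq_nonneg (k - 2)]
  · -- γ ≠ 0
    have hle : m ≤ |2*γ| := Int.le_of_dvd (abs_pos.mpr (by omega : 2*γ ≠ 0)) ((dvd_abs _ _).mpr h3)
    have hlow : γ^2 + 1 ≤ m := by nlinarith [sq_nonneg α, sq_nonneg (α - 3*β)]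
    have hγ1 : γ^2 ≤ 1 := by nlinarith [sq_abs (2*γ), sq_nonneg (γ^2 - 1), abs_nonneg (2*γ)]
    have hγ2 : γ^2 = 1 := by
      rcases (by omega : γ ≤ -1 ∨ 1 ≤ γ) with h | h <;> nlinarith
    have hm2 : m ≤ 2 := by
      have : |2*γ| = 2 := by
        rcases abs_choice (2*γ) with h | h <;> [skip; skip] <;> nlinarith [sq_abs (2*γ)]
      omega
    nlinarith [sq_nonneg (2*α - 3*β), sq_nonneg α, sq_nonneg (α - 3*β)]

/-- Every root of `M = e^⊥` satisfies the parity condition `2 ∣ r 0 + r 1`. -/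
lemma root_parity (r : Fin 5 → ℤ) (h0 : Bform 11 r eVec = 0) (hpos : 0 < Qform 11 r)
    (hdvd : ∀ x : Fin 5 → ℤ, Bform 11 x eVec = 0 → Qform 11 r ∣ 2 * Bform 11 r x) :
    2 ∣ (r 0 + r 1) := by
  have d1 := hdvd ![0,0,1,-1,0] (by decide)
  have d3 := hdvd ![0,0,0,0,1] (by decide)
  rw [Bform_apply] at h0 d1 d3
  simp [eVec] at h0 d1 d3
  have hQ : Qform 11 r = 2*(r 0 - r 3)^2 - 6*(r 0 - r 3)*(r 1 - 3*r 0) +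
      10*(r 1 - 3*r 0)^2 + (r 4)^2 := by
    rw [Qform, Bform_apply]
    linear_combination (r 2 + 11*r 0 - 3*r 1 - r 3) * h0
  have e1 : 2 * (r 2 + -r 3) = 2*(2*(r 0 - r 3) - 3*(r 1 - 3*r 0)) := by linarith
  rw [e1] at d1
  have := core_parity (r 0 - r 3) (r 1 - 3*r 0) (r 4) (Qform 11 r) hpos hQ d1 d3
  omega

/-- The orthogonal complement of `eVec` as an additive subgroup. -/
def Kgrp : AddSubgroup (Fin 5 → ℤ) where
  carrier := {x : Fin 5 → ℤ | Bform 11 x eVec = 0}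
  add_mem' := by
    intro a b ha hb
    simp only [Set.mem_setOf_eq, Bform_apply, Pi.add_apply] at *
    ring_nf
    ring_nf at ha hb
    linarith
  zero_mem' := by simp [Set.mem_setOf_eq, Bform_apply]
  neg_mem' := by
    intro a ha
    simp only [Set.mem_setOf_eq, Bform_apply, Pi.neg_apply] at *
    linarith

/-- Parity functional to `ZMod 2`. -/
def fhom : (Fin 5 → ℤ) →+ ZMod 2 where
  toFun x := ((x 0 + x 1 : ℤ) : ZMod 2)
  map_zero' := by simp
  map_add' a b := by
    simp only [Pi.add_apply]
    push_cast
    ring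

theorem stmt14 :
    Qform 11 eVec = 0 ∧
    ((AddSubgroup.closure (insert eVec
        {r : Fin 5 → ℤ | Bform 11 r eVec = 0 ∧ 0 < Qform 11 r ∧
          ∀ x : Fin 5 → ℤ, Bform 11 x eVec = 0 → Qform 11 r ∣ 2 * Bform 11 r x}) :
        Set (Fin 5 → ℤ)) ⊂ {x : Fin 5 → ℤ | Bform 11 x eVec = 0}) := by
  constructor
  · decide
  · set S : Set (Fin 5 → ℤ) := insert eVec
      {r : Fin 5 → ℤ | Bform 11 r eVec = 0 ∧ 0 < Qform 11 r ∧
        ∀ x : Fin 5 → ℤ, Bform 11 x eVec = 0 → Qform 11 r ∣ 2 * Bform 11 r x} with hS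
    have hsub : AddSubgroup.closure S ≤ Kgrp := by
      rw [AddSubgroup.closure_le]
      rintro r (rfl | ⟨h1, _, _⟩)
      · show Bform 11 eVec eVec = 0; decide
      · exact h1
    have hker : AddSubgroup.closure S ≤ fhom.ker := by
      rw [AddSubgroup.closure_le]
      rintro r (rfl | ⟨h1, h2, h3⟩)
      · show fhom eVec = 0; decide
      · show fhom r = 0
        have := root_parity r h1 h2 h3
        simpa [fhom, ZMod.intCast_zmod_eq_zero_iff_dvd] using
          (ZMod.intCast_zmod_eq_zero_iff_dvd (r 0 + r 1) 2).mpr this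
    rw [Set.ssubset_def]
    constructor
    · intro x hx
      exact hsub hx
    · intro hcon
      have hw : (![0,1,-3,0,0] : Fin 5 → ℤ) ∈ {x : Fin 5 → ℤ | Bform 11 x eVec = 0} := by
        show Bform 11 ![0,1,-3,0,0] eVec = 0; decide
      have hmem : (![0,1,-3,0,0] : Fin 5 → ℤ) ∈ AddSubgroup.closure S := hcon hw
      have : fhom ![0,1,-3,0,0] = 0 := hker hmem
      simp [fhom] at this
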